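/- For m, n, a, b real with n > -1, m+n+1 > 0, a > 0, b ≥ 0, the normalized Nuttall Q-function admits the exact series representation 𝒬_{m,n}(a,b) = ∑_{l=0}^∞ a^{2l} e^{-a²/2} Γ((m+n+2l+1)/2, b²/2) / (l! · Γ(n+l+1) · 2^{(n-m+2l+1)/2}), where Γ(·,·) is the upper incomplete gamma function. -/

import Mathlib

open MeasureTheory Real Filter

noncomputable def uGamma (a x : ℝ) : ℝ := ∫ t in Set.Ioi x, t ^ (a - 1) * Real.exp (-t)

noncomputable def lGamma (a x : ℝ) : ℝ := ∫ t in Set.Ioc 0 x, t ^ (a - 1) * Real.exp (-t)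

noncomputable def poch (x : ℝ) (l : ℕ) : ℝ := ∏ i ∈ Finset.range l, (x + i)

noncomputable def besselI (n x : ℝ) : ℝ :=
  ∑' l : ℕ, (x / 2) ^ (n + 2 * (l : ℝ)) / ((l.factorial : ℝ) * Real.Gamma (n + (l : ℝ) + 1))

noncomputable def oneF₁ (α β x : ℝ) : ℝ :=
  ∑' i : ℕ, (poch α i / poch β i) * x ^ i / (i.factorial : ℝ)

noncomputable def nuttallQ (m n a b : ℝ) : ℝ :=
  ∫ x in Set.Ioi b, x ^ m * Real.exp (-(x ^ 2 + a ^ 2) / 2) * besselI n (a * x)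

noncomputable def nQ (m n a b : ℝ) : ℝ := a ^ (-n) * nuttallQ m n a b

noncomputable def marcumQ (ν a b : ℝ) : ℝ :=
  a ^ (1 - ν) * ∫ x in Set.Ioi b, x ^ ν * Real.exp (-(x ^ 2 + a ^ 2) / 2) * besselI (ν - 1) (a * x)

noncomputable def toronto (B m n r : ℝ) : ℝ :=
  2 * r ^ (n - m + 1) * Real.exp (-r ^ 2) *
    ∫ t in Set.Ioo 0 B, t ^ (m - n) * Real.exp (-t ^ 2) * besselI n (2 * r * t)

lemma image_sq_half (b : ℝ) (hb : 0 ≤ b) :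
    (fun x : ℝ => x ^ 2 / 2) '' Set.Ioi b = Set.Ioi (b ^ 2 / 2) := by
  ext t
  simp only [Set.mem_image, Set.mem_Ioi]
  constructor
  · rintro ⟨x, hx, rfl⟩
    nlinarith
  · intro ht
    have ht0 : (0:ℝ) ≤ 2 * t := by nlinarith
    refine ⟨Real.sqrt (2 * t), ?_, ?_⟩
    · exact (Real.lt_sqrt hb).2 (by nlinarith)
    · rw [Real.sq_sqrt ht0]; ring

lemma keylem (s b : ℝ) (hs : 0 < s + 1) (hb : 0 ≤ b) :
    IntegrableOn (fun x : ℝ => x ^ s * Real.exp (-x ^ 2 / 2)) (Set.Ioi b) ∧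
      ∫ x in Set.Ioi b, x ^ s * Real.exp (-x ^ 2 / 2)
        = 2 ^ ((s - 1) / 2) * uGamma ((s + 1) / 2) (b ^ 2 / 2) := by
  have hderiv : ∀ x ∈ Set.Ioi b, HasDerivWithinAt (fun x : ℝ => x ^ 2 / 2) x (Set.Ioi b) x := by
    intro x _
    have h := (hasDerivAt_pow 2 x).div_const 2
    have : ((2:ℕ):ℝ) * x ^ (2 - 1) / 2 = x := by norm_num
    rw [this] at h
    exact h.hasDerivWithinAt
  have hinj : Set.InjOn (fun x : ℝ => x ^ 2 / 2) (Set.Ioi b) := by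
    intro x hx y hy hxy
    simp only [Set.mem_Ioi] at hx hy
    nlinarith
  have himg := image_sq_half b hb
  set g : ℝ → ℝ := fun t => t ^ ((s + 1) / 2 - 1) * Real.exp (-t) with hg
  have hC : (0:ℝ) < (2:ℝ) ^ (-((s - 1) / 2)) := by positivity
  have heq : Set.EqOn (fun x => |x| • g (x ^ 2 / 2))
      (fun x => (2:ℝ) ^ (-((s - 1) / 2)) * (x ^ s * Real.exp (-x ^ 2 / 2))) (Set.Ioi b) := by
    intro x hx
    have hx0 : 0 < x := lt_of_le_of_lt hb hx
    have e1 : ((s + 1) / 2 - 1) = (s - 1) / 2 := by ring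
    have e2 : (x ^ 2 / 2 : ℝ) ^ ((s - 1) / 2) = x ^ (s - 1) / 2 ^ ((s - 1) / 2) := by
      rw [Real.div_rpow (by positivity) (by norm_num), ← Real.rpow_natCast x 2,
        ← Real.rpow_mul hx0.le]
      rw [show ((2:ℕ):ℝ) * ((s - 1) / 2) = s - 1 by push_cast; ring]
    simp only [smul_eq_mul, hg, e1, e2, abs_of_pos hx0]
    rw [Real.rpow_neg (by norm_num)]
    have e3 : x * (x ^ (s - 1) / 2 ^ ((s - 1) / 2) * Real.exp (-(x ^ 2 / 2)))
        = (x * x ^ (s - 1)) * Real.exp (-(x ^ 2) / 2) / 2 ^ ((s - 1) / 2) := by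
      rw [neg_div]; ring
    have e4 : x * x ^ (s - 1) = x ^ s := by
      nth_rewrite 1 [← Real.rpow_one x]
      rw [← Real.rpow_add hx0]; ring_nf
    rw [e3, e4]; ring
  have hgint : IntegrableOn g (Set.Ioi (b ^ 2 / 2)) := by
    have h1 := Real.GammaIntegral_convergent (s := (s + 1) / 2) (by linarith)
    have h2 : IntegrableOn (fun x : ℝ => Real.exp (-x) * x ^ ((s + 1) / 2 - 1))
        (Set.Ioi (b ^ 2 / 2)) := h1.mono_set (Set.Ioi_subset_Ioi (by positivity))
    exact h2.congr_fun (fun x _ => mul_comm _ _) measurableSet_Ioi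
  have h1 : IntegrableOn (fun x => |x| • g (x ^ 2 / 2)) (Set.Ioi b) := by
    rw [← integrableOn_image_iff_integrableOn_abs_deriv_smul measurableSet_Ioi hderiv hinj]
    rwa [himg]
  have h2 : IntegrableOn (fun x => (2:ℝ) ^ (-((s - 1) / 2)) * (x ^ s * Real.exp (-x ^ 2 / 2)))
      (Set.Ioi b) := h1.congr_fun heq measurableSet_Ioi
  have hint : IntegrableOn (fun x : ℝ => x ^ s * Real.exp (-x ^ 2 / 2)) (Set.Ioi b) := by
    have h3 : IntegrableOn
        (fun x => (2:ℝ) ^ ((s - 1) / 2) *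
          ((2:ℝ) ^ (-((s - 1) / 2)) * (x ^ s * Real.exp (-x ^ 2 / 2)))) (Set.Ioi b) :=
      h2.const_mul ((2:ℝ) ^ ((s - 1) / 2))
    refine h3.congr_fun (fun x _ => ?_) measurableSet_Ioi
    rw [Real.rpow_neg (by norm_num)]
    field_simp
  refine ⟨hint, ?_⟩
  have hval : uGamma ((s + 1) / 2) (b ^ 2 / 2)
      = (2:ℝ) ^ (-((s - 1) / 2)) * ∫ x in Set.Ioi b, x ^ s * Real.exp (-x ^ 2 / 2) := by
    rw [uGamma, ← himg,
      integral_image_eq_integral_abs_deriv_smul measurableSet_Ioi hderiv hinj,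
      setIntegral_congr_fun measurableSet_Ioi heq, integral_const_mul]
  rw [hval, ← mul_assoc, ← Real.rpow_add (by norm_num)]
  norm_num

lemma uGamma_le_Gamma (a x : ℝ) (ha : 0 < a) (hx : 0 ≤ x) : uGamma a x ≤ Real.Gamma a := by
  rw [Real.Gamma_eq_integral ha, uGamma]
  rw [setIntegral_congr_fun measurableSet_Ioi
    (g := fun t => t ^ (a - 1) * Real.exp (-t)) (fun t _ => mul_comm _ _)]
  apply setIntegral_mono_set
  · exact (Real.GammaIntegral_convergent ha).congr_fun (fun t _ => mul_comm _ _) measurableSet_Ioi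
  · filter_upwards [ae_restrict_mem measurableSet_Ioi] with t ht
    have : (0:ℝ) < t := ht
    positivity
  · exact HasSubset.Subset.eventuallyLE (Set.Ioi_subset_Ioi hx)

lemma summable_aux (q c d : ℝ) (hq : 0 < q) (hc : 0 < c) (hd : 0 < d) :
    Summable (fun l : ℕ => q ^ l * Real.Gamma (c + l) / ((l.factorial : ℝ) * Real.Gamma (d + l))) := by
  set T : ℕ → ℝ := fun l => q ^ l * Real.Gamma (c + l) / ((l.factorial : ℝ) * Real.Gamma (d + l)) with hT
  have hpos : ∀ l : ℕ, 0 < T l := by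
    intro l
    have h1 : 0 < Real.Gamma (c + l) := Real.Gamma_pos_of_pos (by positivity)
    have h2 : 0 < Real.Gamma (d + l) := Real.Gamma_pos_of_pos (by positivity)
    have h3 : 0 < (l.factorial : ℝ) := by positivity
    positivity
  have hratio : ∀ l : ℕ, ‖T (l + 1)‖ / ‖T l‖ = q * (c + l) / ((l + 1) * (d + l)) := by
    intro l
    have h1 : 0 < Real.Gamma (c + l) := Real.Gamma_pos_of_pos (by positivity)
    have h2 : 0 < Real.Gamma (d + l) := Real.Gamma_pos_of_pos (by positivity)
    have h3 : 0 < (l.factorial : ℝ) := by positivity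
    rw [Real.norm_of_nonneg (hpos _).le, Real.norm_of_nonneg (hpos _).le, hT]
    simp only
    have ec : c + ((l : ℝ) + 1) = (c + l) + 1 := by push_cast; ring
    have ed : d + ((l : ℝ) + 1) = (d + l) + 1 := by push_cast; ring
    rw [show ((l + 1 : ℕ) : ℝ) = (l : ℝ) + 1 by push_cast; ring] at *
    rw [Nat.factorial_succ, ec, ed,
      Real.Gamma_add_one (by positivity), Real.Gamma_add_one (by positivity)]
    push_cast
    field_simp
    ring
  apply summable_of_ratio_test_tendsto_lt_one (l := 0) one_pos
  · exact Eventually.of_forall fun l => (hpos l).ne'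
  · rw [show (fun l : ℕ => ‖T (l + 1)‖ / ‖T l‖) = fun l : ℕ => q * (c + l) / ((l + 1) * (d + l))
      from funext hratio]
    have h1 : Tendsto (fun l : ℕ => q * (c + l) / ((l + 1) * (d + l))) atTop (nhds 0) := by
      have key : ∀ᶠ l : ℕ in atTop, q * (c + l) / ((l + 1) * (d + l))
          = (q * ((c + l) / (d + l))) * (1 / ((l : ℝ) + 1)) := by
        filter_upwards with l
        have h2 : (0:ℝ) < d + l := by positivity
        have h3 : (0:ℝ) < (l : ℝ) + 1 := by positivity
        field_simp
      rw [tendsto_congr' key]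
      have hfrac : Tendsto (fun l : ℕ => (c + l) / (d + l)) atTop (nhds 1) := by
        have hd' : Tendsto (fun l : ℕ => d + (l : ℝ)) atTop atTop :=
          tendsto_atTop_add_const_left _ _ tendsto_natCast_atTop_atTop
        have h0 : Tendsto (fun l : ℕ => (c - d) / (d + l)) atTop (nhds 0) :=
          Tendsto.div_atTop tendsto_const_nhds hd'
        have he : ∀ᶠ l : ℕ in atTop, 1 + (c - d) / (d + (l:ℝ)) = (c + l) / (d + l) := by
          filter_upwards with l
          have h2 : (0:ℝ) < d + l := by positivity
          field_simp
          ring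
        rw [← tendsto_congr' he]
        simpa using (tendsto_const_nhds (x := (1:ℝ))).add h0
      have := ((tendsto_const_nhds (x := q)).mul hfrac).mul tendsto_one_div_add_atTop_nhds_zero_nat
      simpa using this
    exact h1

theorem stmt6 (m n a b : ℝ) (hn : -1 < n) (hmn : 0 < m + n + 1) (ha : 0 < a) (hb : 0 ≤ b) :
    HasSum (fun l : ℕ =>
        a ^ (2 * l) * Real.exp (-a ^ 2 / 2) *
          uGamma ((m + n + 2 * (l : ℝ) + 1) / 2) (b ^ 2 / 2) /
          ((l.factorial : ℝ) * Real.Gamma (n + (l : ℝ) + 1) *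
            (2 : ℝ) ^ ((n - m + 2 * (l : ℝ) + 1) / 2)))
      (nQ m n a b) := by
  have hb2 : (0:ℝ) ≤ b ^ 2 / 2 := by positivity
  have hΓ : ∀ l : ℕ, 0 < Real.Gamma (n + (l:ℝ) + 1) := fun l =>
    Real.Gamma_pos_of_pos (by have := Nat.cast_nonneg (α := ℝ) l; linarith)
  have hfac : ∀ l : ℕ, (0:ℝ) < (l.factorial : ℝ) := fun l => by positivity
  have hs : ∀ l : ℕ, 0 < (m + n + 2 * (l:ℝ)) + 1 := fun l => by
    have := Nat.cast_nonneg (α := ℝ) l; linarith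
  set F : ℕ → ℝ → ℝ := fun l x =>
    (x ^ m * Real.exp (-(x ^ 2 + a ^ 2) / 2)) *
      ((a * x / 2) ^ (n + 2 * (l : ℝ)) / ((l.factorial : ℝ) * Real.Gamma (n + (l : ℝ) + 1)))
    with hFdef
  set C : ℕ → ℝ := fun l =>
    (a / 2) ^ (n + 2 * (l : ℝ)) * Real.exp (-a ^ 2 / 2) /
      ((l.factorial : ℝ) * Real.Gamma (n + (l : ℝ) + 1)) with hCdef
  have hCnn : ∀ l : ℕ, 0 ≤ C l := fun l => by
    rw [hCdef]
    exact div_nonneg (mul_nonneg (Real.rpow_nonneg (by positivity) _) (Real.exp_nonneg _))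
      (le_of_lt (mul_pos (hfac l) (hΓ l)))
  have hEq : ∀ l : ℕ, Set.EqOn (F l)
      (fun x => C l * (x ^ (m + n + 2 * (l:ℝ)) * Real.exp (-x ^ 2 / 2))) (Set.Ioi b) := by
    intro l x hx
    have hx0 : 0 < x := lt_of_le_of_lt hb hx
    have ex : x ^ (m + n + 2 * (l:ℝ)) = x ^ m * x ^ (n + 2 * (l:ℝ)) := by
      rw [← Real.rpow_add hx0]; congr 1; ring
    simp only [hFdef, hCdef]
    rw [show a * x / 2 = (a / 2) * x by ring,
      Real.mul_rpow (by positivity) hx0.le, ex,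
      show -(x ^ 2 + a ^ 2) / 2 = -x ^ 2 / 2 + -a ^ 2 / 2 by ring, Real.exp_add]
    ring
  have hInt : ∀ l : ℕ, IntegrableOn (F l) (Set.Ioi b) := by
    intro l
    have h1 : IntegrableOn
        (fun x => C l * (x ^ (m + n + 2 * (l:ℝ)) * Real.exp (-x ^ 2 / 2))) (Set.Ioi b) :=
      (keylem _ b (hs l) hb).1.const_mul (C l)
    exact h1.congr_fun (fun x hx => (hEq l hx).symm) measurableSet_Ioi
  have hVal : ∀ l : ℕ, ∫ x in Set.Ioi b, F l x
      = C l * (2 ^ ((m + n + 2 * (l:ℝ) - 1) / 2)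
          * uGamma ((m + n + 2 * (l:ℝ) + 1) / 2) (b ^ 2 / 2)) := by
    intro l
    rw [setIntegral_congr_fun measurableSet_Ioi (hEq l), integral_const_mul, (keylem _ b (hs l) hb).2]
  have hFnn : ∀ l : ℕ, ∀ x ∈ Set.Ioi b, 0 ≤ F l x := by
    intro l x hx
    have hx0 : 0 < x := lt_of_le_of_lt hb hx
    exact mul_nonneg (mul_nonneg (Real.rpow_nonneg hx0.le _) (Real.exp_nonneg _))
      (div_nonneg (Real.rpow_nonneg (by positivity) _) (le_of_lt (mul_pos (hfac l) (hΓ l))))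
  have hNorm : ∀ l : ℕ, ∫ x in Set.Ioi b, ‖F l x‖ = ∫ x in Set.Ioi b, F l x := fun l =>
    setIntegral_congr_fun measurableSet_Ioi (fun x hx => Real.norm_of_nonneg (hFnn l x hx))
  -- summability
  have hq : (0:ℝ) < a ^ 2 / 2 := by positivity
  have hc : (0:ℝ) < (m + n + 1) / 2 := by linarith
  have hd : (0:ℝ) < n + 1 := by linarith
  set K : ℝ := (a / 2) ^ n * Real.exp (-a ^ 2 / 2) * 2 ^ ((m + n - 1) / 2) with hK
  have hKnn : 0 ≤ K := by positivity
  have hBound : ∀ l : ℕ, ∫ x in Set.Ioi b, ‖F l x‖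
      ≤ K * ((a ^ 2 / 2) ^ l * Real.Gamma ((m + n + 1) / 2 + l)
          / ((l.factorial : ℝ) * Real.Gamma ((n + 1) + l))) := by
    intro l
    rw [hNorm l, hVal l]
    have h1 : C l * (2 ^ ((m + n + 2 * (l:ℝ) - 1) / 2)
          * uGamma ((m + n + 2 * (l:ℝ) + 1) / 2) (b ^ 2 / 2))
        ≤ C l * (2 ^ ((m + n + 2 * (l:ℝ) - 1) / 2)
          * Real.Gamma ((m + n + 2 * (l:ℝ) + 1) / 2)) := by
      refine mul_le_mul_of_nonneg_left (mul_le_mul_of_nonneg_left ?_ (by positivity)) (hCnn l)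
      exact uGamma_le_Gamma _ _ (by have := hs l; linarith) hb2
    refine le_trans h1 (le_of_eq ?_)
    simp only [hCdef]
    have eA : (a / 2 : ℝ) ^ (n + 2 * (l:ℝ)) = (a / 2) ^ n * ((a / 2) ^ 2) ^ l := by
      rw [Real.rpow_add (by positivity), show (2 * (l:ℝ)) = ((2 * l : ℕ) : ℝ) by push_cast; ring,
        Real.rpow_natCast, pow_mul]
    have eB : (2:ℝ) ^ ((m + n + 2 * (l:ℝ) - 1) / 2) = 2 ^ ((m + n - 1) / 2) * 2 ^ l := by
      rw [show (m + n + 2 * (l:ℝ) - 1) / 2 = (m + n - 1) / 2 + l by ring,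
        Real.rpow_add two_pos, Real.rpow_natCast]
    have eC : Real.Gamma ((m + n + 2 * (l:ℝ) + 1) / 2) = Real.Gamma ((m + n + 1) / 2 + l) := by
      congr 1; ring
    have eD : Real.Gamma (n + (l:ℝ) + 1) = Real.Gamma ((n + 1) + l) := by congr 1; ring
    rw [eA, eB, eC, eD, hK]
    field_simp
    ring_nf
    rw [mul_assoc, ← mul_pow]; norm_num
  have hSum : Summable (fun l : ℕ => ∫ x in Set.Ioi b, ‖F l x‖) :=
    Summable.of_nonneg_of_le (fun l => integral_nonneg (fun x => norm_nonneg _)) hBound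
      (((summable_aux (a ^ 2 / 2) ((m + n + 1) / 2) (n + 1) hq hc hd).mul_left K))
  have H := hasSum_integral_of_summable_integral_norm (μ := volume.restrict (Set.Ioi b))
    (F := F) hInt hSum
  have htsum : (fun x => ∑' l, F l x)
      = fun x => x ^ m * Real.exp (-(x ^ 2 + a ^ 2) / 2) * besselI n (a * x) := by
    funext x
    rw [besselI, ← tsum_mul_left]
  rw [htsum] at H
  have H2 := H.mul_left (a ^ (-n))
  have hnq : nQ m n a b = a ^ (-n) *
      ∫ x in Set.Ioi b, x ^ m * Real.exp (-(x ^ 2 + a ^ 2) / 2) * besselI n (a * x) := by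
    rw [nQ, nuttallQ]
  rw [← hnq] at H2
  have hterm : ∀ l : ℕ, a ^ (-n) * ∫ x in Set.Ioi b, F l x
      = a ^ (2 * l) * Real.exp (-a ^ 2 / 2) *
          uGamma ((m + n + 2 * (l : ℝ) + 1) / 2) (b ^ 2 / 2) /
          ((l.factorial : ℝ) * Real.Gamma (n + (l : ℝ) + 1) *
            (2 : ℝ) ^ ((n - m + 2 * (l : ℝ) + 1) / 2)) := by
    intro l
    rw [hVal l]
    simp only [hCdef]
    have e1 : (a / 2 : ℝ) ^ (n + 2 * (l:ℝ)) = a ^ (n + 2 * (l:ℝ)) / 2 ^ (n + 2 * (l:ℝ)) :=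
      Real.div_rpow ha.le (by norm_num) _
    have e2 : a ^ (-n) * a ^ (n + 2 * (l:ℝ)) = a ^ (2 * l) := by
      rw [← Real.rpow_add ha, show -n + (n + 2 * (l:ℝ)) = ((2 * l : ℕ) : ℝ) by push_cast; ring,
        Real.rpow_natCast]
    have e3 : (2:ℝ) ^ ((m + n + 2 * (l:ℝ) - 1) / 2) / 2 ^ (n + 2 * (l:ℝ))
        = ((2:ℝ) ^ ((n - m + 2 * (l:ℝ) + 1) / 2))⁻¹ := by
      rw [← Real.rpow_sub two_pos, ← Real.rpow_neg (by norm_num : (0:ℝ) ≤ 2)]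
      congr 1; ring
    have h2q : ((2:ℝ) ^ ((n - m + 2 * (l:ℝ) + 1) / 2)) ≠ 0 := by positivity
    have h2p : ((2:ℝ) ^ (n + 2 * (l:ℝ))) ≠ 0 := by positivity
    have hΓ' : Real.Gamma (n + (l:ℝ) + 1) ≠ 0 := (hΓ l).ne'
    have hfac' : ((l.factorial : ℝ)) ≠ 0 := (hfac l).ne'
    rw [e1]
    rw [show a ^ (-n) * (a ^ (n + 2 * (l:ℝ)) / 2 ^ (n + 2 * (l:ℝ)) * Real.exp (-a ^ 2 / 2) /
          ((l.factorial : ℝ) * Real.Gamma (n + (l:ℝ) + 1)) *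
          (2 ^ ((m + n + 2 * (l:ℝ) - 1) / 2) *
            uGamma ((m + n + 2 * (l:ℝ) + 1) / 2) (b ^ 2 / 2)))
        = (a ^ (-n) * a ^ (n + 2 * (l:ℝ))) *
            ((2:ℝ) ^ ((m + n + 2 * (l:ℝ) - 1) / 2) / 2 ^ (n + 2 * (l:ℝ))) *
            Real.exp (-a ^ 2 / 2) * uGamma ((m + n + 2 * (l:ℝ) + 1) / 2) (b ^ 2 / 2) /
            ((l.factorial : ℝ) * Real.Gamma (n + (l:ℝ) + 1)) from by field_simp]
    rw [e2, e3]
    field_simp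
  rw [show (fun l : ℕ => a ^ (-n) * ∫ x in Set.Ioi b, F l x)
      = (fun l : ℕ => a ^ (2 * l) * Real.exp (-a ^ 2 / 2) *
          uGamma ((m + n + 2 * (l : ℝ) + 1) / 2) (b ^ 2 / 2) /
          ((l.factorial : ℝ) * Real.Gamma (n + (l : ℝ) + 1) *
            (2 : ℝ) ^ ((n - m + 2 * (l : ℝ) + 1) / 2))) from funext hterm] at H2
  exact H2
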